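/- Let n ≥ 1 be an integer and let β be the symmetric bilinear form on ℝ⁴ with ordered basis (s, e₂, e₃, F) determined by β(s,s) = −n, β(e₂,e₂) = −1, β(e₃,e₃) = −2, β(e₂,e₃) = 1, β(F,F) = 0, β(s,F) = 1, and β(u,v) = 0 for every other pair of distinct basis vectors. Set e₁ = F − 2e₂ − e₃. Then {x ∈ ℝ⁴ : β(x, v) ≥ 0 for every v ∈ {s, e₁, e₂, e₃}} = cone({F, s + nF, 2s + 2nF − 2e₂ − e₃, s + nF − e₂ − e₃}). -/

import Mathlib

/-- The convex cone generated by a set `s`: all finite nonnegative real linear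
combinations of elements of `s`. -/
def coneHull {E : Type*} [AddCommMonoid E] [Module ℝ E] (s : Set E) : Set E :=
  {x | ∃ (n : ℕ) (c : Fin n → ℝ) (g : Fin n → E),
    (∀ i, 0 ≤ c i) ∧ (∀ i, g i ∈ s) ∧ x = ∑ i, c i • g i}

/-- The intersection form on `ℝ⁴` in the ordered basis `(s, e₂, e₃, F)` determined by
`β(s,s)=−n`, `β(e₂,e₂)=−1`, `β(e₃,e₃)=−2`, `β(e₂,e₃)=1`, `β(F,F)=0`, `β(s,F)=1`, and
`β = 0` on every other pair of distinct basis vectors. -/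
def interForm15 (n : ℕ) (x y : Fin 4 → ℝ) : ℝ :=
  -(n : ℝ) * (x 0 * y 0) - x 1 * y 1 - 2 * (x 2 * y 2) + (x 1 * y 2 + x 2 * y 1) +
    x 0 * y 3 + x 3 * y 0

lemma interForm15_add (n : ℕ) (x y v : Fin 4 → ℝ) :
    interForm15 n (x + y) v = interForm15 n x v + interForm15 n y v := by
  simp [interForm15]; ring

lemma interForm15_smul (n : ℕ) (c : ℝ) (x v : Fin 4 → ℝ) :
    interForm15 n (c • x) v = c * interForm15 n x v := by
  simp [interForm15]; ring

lemma interForm15_sum (n : ℕ) {ι : Type*} (s : Finset ι) (f : ι → (Fin 4 → ℝ))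
    (v : Fin 4 → ℝ) :
    interForm15 n (∑ i ∈ s, f i) v = ∑ i ∈ s, interForm15 n (f i) v := by
  induction s using Finset.cons_induction with
  | empty => simp [interForm15]
  | cons a s ha ih => simp [Finset.sum_cons, interForm15_add, ih]

/-- With `e₁ = F − 2e₂ − e₃`, the dual cone of `{s, e₁, e₂, e₃}` with
respect to the intersection form is generated by `F`, `s + nF`, `2s + 2nF − 2e₂ − e₃`,
`s + nF − e₂ − e₃`. -/
theorem statement15 (n : ℕ) (hn : 1 ≤ n) :
    {x : Fin 4 → ℝ | ∀ v ∈ ({![1, 0, 0, 0], ![0, -2, -1, 1], ![0, 1, 0, 0],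
        ![0, 0, 1, 0]} : Set (Fin 4 → ℝ)), 0 ≤ interForm15 n x v} =
      coneHull {![0, 0, 0, 1], ![1, 0, 0, (n : ℝ)], ![2, -2, -1, 2 * (n : ℝ)],
        ![1, -1, -1, (n : ℝ)]} := by
  ext x
  constructor
  · intro hx
    have h1 := hx ![1, 0, 0, 0] (by simp)
    have h2 := hx ![0, -2, -1, 1] (by simp)
    have h3 := hx ![0, 1, 0, 0] (by simp)
    have h4 := hx ![0, 0, 1, 0] (by simp)
    simp [interForm15] at h1 h2 h3 h4
    refine ⟨4, ![x 3 - n * x 0, x 0 + x 1, x 2 - x 1, x 1 - 2 * x 2],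
      ![![0, 0, 0, 1], ![1, 0, 0, (n : ℝ)], ![2, -2, -1, 2 * (n : ℝ)],
        ![1, -1, -1, (n : ℝ)]], ?_, ?_, ?_⟩
    · intro i; fin_cases i <;> simp <;> linarith
    · intro i; fin_cases i <;> simp
    · funext j
      fin_cases j <;> simp [Fin.sum_univ_four, Matrix.vecHead, Matrix.vecTail] <;> ring
  · rintro ⟨m, c, g, hc, hg, rfl⟩
    intro v hv
    rw [interForm15_sum]
    apply Finset.sum_nonneg
    intro i _
    rw [interForm15_smul]
    apply mul_nonneg (hc i)
    have hgi := hg i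
    simp only [Set.mem_insert_iff, Set.mem_singleton_iff] at hgi hv
    rcases hv with rfl | rfl | rfl | rfl <;>
      rcases hgi with h | h | h | h <;> rw [h] <;> norm_num [interForm15, Matrix.cons_val_two, Matrix.cons_val_three, Matrix.vecHead, Matrix.vecTail] <;> linarith
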